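/- Let (β_1,…,β_B) be a deck of feasible ballots that detects every non-identity bijection on N. Let C̄ ⊆ C be a set of contests and N̄ = ∪_{c ∈ C̄} N_c the candidates in them. Consider the reduced ballot style with candidates N \ N̄ and contests C \ C̄ (with unchanged N_c and v_c). Then the reduced deck (β_1 \ N̄, …, β_B \ N̄) is feasible for the reduced style and detects every non-identity bijection on N \ N̄. -/

import Mathlib

open Finset

variable {ι γ : Type*} [Fintype ι] [DecidableEq ι] [DecidableEq γ]

/-- A ballot `β` is feasible if, in every contest `c`, it selects at most `v c` candidates. -/
def feasibleBallot (con : ι → γ) (v : γ → ℕ) (β : Finset ι) : Prop :=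
  ∀ c : γ, (β.filter fun j => con j = c).card ≤ v c

/-- The tally of candidate `i` output by a machine whose candidate-to-target mapping is `σ`,
on the deck `β`. A ballot contributes iff it selects target `σ i` and the contest of `i`
is not interpreted as overvoted under `σ`. -/
def tally (con : ι → γ) (v : γ → ℕ) (σ : ι → ι) {B : ℕ}
    (β : Fin B → Finset ι) (i : ι) : ℕ :=
  (Finset.univ.filter fun b : Fin B => σ i ∈ β b ∧
    (Finset.univ.filter fun j : ι => con j = con i ∧ σ j ∈ β b).card ≤ v (con i)).card

/-- The number of ballots of the deck selecting the target of candidate `i`. -/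
def voteCount {B : ℕ} (β : Fin B → Finset ι) (i : ι) : ℕ :=
  (Finset.univ.filter fun b : Fin B => i ∈ β b).card

/-- reduced tally agrees with full tally, when σ' and σ agree via val. -/
lemma reduced_tally_eq (con : ι → γ) (v : γ → ℕ) {B : ℕ} (β : Fin B → Finset ι)
    (S : Finset γ) (σ : ι → ι) (σ' : {i : ι // con i ∉ S} → {i : ι // con i ∉ S})
    (hcomm : ∀ j, (σ' j : ι) = σ (j : ι)) (i : {i : ι // con i ∉ S}) :
    tally (fun i : {i : ι // con i ∉ S} => con i.val) v σ'
        (fun b => (β b).subtype fun i => con i ∉ S) i = tally con v σ β i.val := by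
  unfold tally
  congr 1
  apply Finset.filter_congr
  intro b _
  have hmem : (σ' i) ∈ ((β b).subtype fun i => con i ∉ S) ↔ σ i.val ∈ β b := by
    rw [Finset.mem_subtype, hcomm]
  have hcard : (Finset.univ.filter fun j : {i : ι // con i ∉ S} =>
      con j.val = con i.val ∧ σ' j ∈ ((β b).subtype fun i => con i ∉ S)).card =
      (Finset.univ.filter fun j : ι => con j = con i.val ∧ σ j ∈ β b).card := by
    apply Finset.card_bij (fun j _ => j.val)
    · intro a ha
      simp only [Finset.mem_filter, Finset.mem_univ, true_and, Finset.mem_subtype, hcomm] at ha ⊢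
      exact ha
    · intro a _ b _ h
      exact Subtype.ext h
    · intro j hj
      simp only [Finset.mem_filter, Finset.mem_univ, true_and] at hj
      have hjS : con j ∉ S := hj.1 ▸ i.2
      refine ⟨⟨j, hjS⟩, ?_, rfl⟩
      simp only [Finset.mem_filter, Finset.mem_univ, true_and, Finset.mem_subtype, hcomm]
      exact hj
  rw [hcard]
  simp [hmem]

theorem reduced_deck_detects_all
    (con : ι → γ) (v : γ → ℕ) {B : ℕ} (β : Fin B → Finset ι)
    (hfeas : ∀ b, feasibleBallot con v (β b))
    (hdet : ∀ σ : Equiv.Perm ι, σ ≠ 1 → tally con v (⇑σ) β ≠ tally con v id β)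
    (S : Finset γ) :
    (∀ b, feasibleBallot (fun i : {i : ι // con i ∉ S} => con i.val) v
        ((β b).subtype fun i => con i ∉ S)) ∧
    (∀ σ' : Equiv.Perm {i : ι // con i ∉ S}, σ' ≠ 1 →
      tally (fun i : {i : ι // con i ∉ S} => con i.val) v (⇑σ')
          (fun b => (β b).subtype fun i => con i ∉ S) ≠
        tally (fun i : {i : ι // con i ∉ S} => con i.val) v id
          (fun b => (β b).subtype fun i => con i ∉ S)) := by
  constructor
  · intro b c
    refine le_trans ?_ (hfeas b c)
    apply Finset.card_le_card_of_injOn (fun j => j.val)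
    · intro a ha
      simp only [Finset.mem_coe, Finset.mem_filter, Finset.mem_subtype] at ha ⊢
      exact ⟨ha.1, ha.2⟩
    · intro a _ b _ h
      exact Subtype.ext h
  · intro σ' hσ'
    set σ : Equiv.Perm ι := Equiv.Perm.ofSubtype σ' with hσdef
    have hcomm : ∀ j : {i : ι // con i ∉ S}, (σ' j : ι) = σ (j : ι) := by
      intro j
      exact (Equiv.Perm.ofSubtype_apply_of_mem σ' j.2).symm
    have hfix : ∀ j : ι, con j ∈ S → σ j = j := by
      intro j hj
      exact Equiv.Perm.ofSubtype_apply_of_not_mem σ' (by simpa using hj)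
    have hσne : σ ≠ 1 := by
      intro h
      apply hσ'
      ext j
      have := hcomm j
      rw [h] at this
      simpa using this
    have hne := hdet σ hσne
    rw [Function.ne_iff] at hne
    obtain ⟨i, hi⟩ := hne
    have hiS : con i ∉ S := by
      intro hin
      apply hi
      unfold tally
      congr 1
      apply Finset.filter_congr
      intro b _
      have h1 : σ i = i := hfix i hin
      have h2 : (Finset.univ.filter fun j : ι => con j = con i ∧ σ j ∈ β b) =
          (Finset.univ.filter fun j : ι => con j = con i ∧ id j ∈ β b) := by
        apply Finset.filter_congr
        intro j _
        constructor
        · rintro ⟨hc, hm⟩; exact ⟨hc, by simpa [hfix j (hc ▸ hin)] using hm⟩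
        · rintro ⟨hc, hm⟩; exact ⟨hc, by simpa [hfix j (hc ▸ hin)] using hm⟩
      simp [h1, h2]
    rw [Function.ne_iff]
    refine ⟨⟨i, hiS⟩, ?_⟩
    rw [reduced_tally_eq con v β S σ σ' hcomm, reduced_tally_eq con v β S id id (fun _ => rfl)]
    exact hi
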